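/- The integral ∫ exp(-α|x/σ|^β + (α-1)|(x-μ)/σ|^β) dx over the real line is finite for all β ≥ 1, σ > 0, μ > 0, α > 1. -/

import Mathlib

set_option maxHeartbeats 1000000

open MeasureTheory Set

lemma integrable_exp_neg_mul_abs_aux (b : ℝ) (hb : 0 < b) :
    Integrable (fun x : ℝ => Real.exp (-b * |x|)) := by
  have hf : IntegrableOn (fun x : ℝ => Real.exp (-b * |x|)) (Ioi 0) := by
    refine (exp_neg_integrableOn_Ioi 0 hb).congr_fun (fun x hx => ?_) measurableSet_Ioi
    rw [abs_of_pos hx]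
  have int_Iic : IntegrableOn (fun x : ℝ => Real.exp (-b * |x|)) (Iic 0) := by
    rw [← Measure.map_neg_eq_self (volume : Measure ℝ)]
    have m : MeasurableEmbedding fun x : ℝ => -x := (Homeomorph.neg ℝ).measurableEmbedding
    rw [m.integrableOn_map_iff]
    simp_rw [Function.comp_def, abs_neg, neg_preimage, neg_Iic, neg_zero]
    exact Iff.mpr integrableOn_Ici_iff_integrableOn_Ioi hf
  rw [← integrableOn_univ, ← Iic_union_Ioi (a := (0:ℝ))]
  exact int_Iic.union hf

/-- The integral ∫ exp(-α|x/σ|^β + (α-1)|(x-μ)/σ|^β) dx over ℝ is finite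
for all β ≥ 1, σ > 0, μ > 0, α > 1. -/
theorem stmt_4 (β σ μ α : ℝ) (hβ : 1 ≤ β) (hσ : 0 < σ) (hμ : 0 < μ) (hα : 1 < α) :
    Integrable (fun x : ℝ =>
      Real.exp (-α * |x / σ| ^ β + (α - 1) * |(x - μ) / σ| ^ β)) := by
  have hβ0 : 0 < β := lt_of_lt_of_le one_pos hβ
  have hα1 : (0:ℝ) < α - 1 := by linarith
  set m : ℝ := μ / σ with hm_def
  have hm : 0 < m := div_pos hμ hσ
  set r : ℝ := (α / (α - 1)) ^ (β⁻¹) with hr_def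
  have hbase : 1 < α / (α - 1) := (one_lt_div hα1).mpr (by linarith)
  have hr : 1 < r := by
    rw [hr_def]
    exact Real.one_lt_rpow_iff_of_pos (by linarith) |>.mpr (Or.inl ⟨hbase, by positivity⟩)
  set t : ℝ := (1 + r) / 2 with ht_def
  have ht1 : 1 < t := by rw [ht_def]; linarith
  have htr : t < r := by rw [ht_def]; linarith
  have hrβ : r ^ β = α / (α - 1) := by
    rw [hr_def, Real.rpow_inv_rpow (by linarith) (ne_of_gt hβ0)]
  have htβ : t ^ β < α / (α - 1) := by
    rw [← hrβ]
    exact Real.rpow_lt_rpow (by linarith) htr hβ0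
  have htβ0 : 0 < t ^ β := Real.rpow_pos_of_pos (by linarith) β
  set c : ℝ := α - (α - 1) * t ^ β with hc_def
  have hc : 0 < c := by
    have : (α - 1) * t ^ β < α := (lt_div_iff₀' hα1).mp htβ
    rw [hc_def]; linarith
  set e : ℝ := m / (t - 1) with he_def
  have he : 0 < e := div_pos hm (by linarith)
  set K : ℝ := (α - 1) * t ^ β * e ^ β with hK_def
  -- key pointwise bound
  have key : ∀ x : ℝ, -α * |x / σ| ^ β + (α - 1) * |(x - μ) / σ| ^ β
      ≤ (K + c) + (-(c / σ) * |x|) := by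
    intro x
    set u : ℝ := |x| / σ with hu_def
    have hu0 : 0 ≤ u := div_nonneg (abs_nonneg x) hσ.le
    have hxu : |x / σ| = u := by rw [abs_div, abs_of_pos hσ]
    have habs : |x - μ| ≤ |x| + μ := by
      calc |x - μ| = |x + -μ| := by rw [sub_eq_add_neg]
        _ ≤ |x| + |(-μ)| := abs_add_le _ _
        _ = |x| + μ := by rw [abs_neg, abs_of_pos hμ]
    have hv : |(x - μ) / σ| ≤ u + m := by
      rw [abs_div, abs_of_pos hσ, hu_def, hm_def, ← add_div]
      gcongr
    have h3 : (t - 1) * e = m := by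
      rw [he_def, mul_comm, div_mul_cancel₀ _ (by linarith : t - 1 ≠ 0)]
    have hmax : u + m ≤ t * max u e := by
      rcases le_total e u with h | h
      · have h2 : (t - 1) * e ≤ (t - 1) * u := mul_le_mul_of_nonneg_left h (by linarith)
        have h5 : u + (t - 1) * u = t * u := by ring
        rw [max_eq_left h]
        linarith
      · rw [max_eq_right h]
        have h4 : t * e = e + (t - 1) * e := by ring
        linarith
    have hmax0 : 0 ≤ max u e := le_max_of_le_right he.le
    have hvβ : |(x - μ) / σ| ^ β ≤ t ^ β * (u ^ β + e ^ β) := by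
      calc |(x - μ) / σ| ^ β ≤ (t * max u e) ^ β :=
            Real.rpow_le_rpow (abs_nonneg _) (le_trans hv hmax) hβ0.le
        _ = t ^ β * (max u e) ^ β := Real.mul_rpow (by linarith) hmax0
        _ ≤ t ^ β * (u ^ β + e ^ β) := by
            apply mul_le_mul_of_nonneg_left ?_ htβ0.le
            rcases max_cases u e with ⟨h1, _⟩ | ⟨h1, _⟩ <;> rw [h1]
            · nlinarith [Real.rpow_nonneg he.le β]
            · nlinarith [Real.rpow_nonneg hu0 β]
    have huβ : u - 1 ≤ u ^ β := by
      rcases le_total u 1 with h | h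
      · have := Real.rpow_nonneg hu0 β
        linarith
      · calc u - 1 ≤ u := by linarith
          _ = u ^ (1:ℝ) := (Real.rpow_one u).symm
          _ ≤ u ^ β := Real.rpow_le_rpow_of_exponent_le h hβ
    have hstep : (α - 1) * |(x - μ) / σ| ^ β ≤ (α - 1) * t ^ β * u ^ β + K := by
      rw [hK_def]
      nlinarith [hvβ]
    have hcs : c / σ * |x| = c * u := by rw [hu_def]; field_simp
    rw [hxu]
    have : -α * u ^ β + ((α - 1) * t ^ β * u ^ β + K) = -c * u ^ β + K := by
      rw [hc_def]; ring
    nlinarith [hstep, huβ, hcs]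
  have hcσ : 0 < c / σ := div_pos hc hσ
  apply Integrable.mono' ((integrable_exp_neg_mul_abs_aux (c / σ) hcσ).const_mul
    (Real.exp (K + c)))
  · apply Continuous.aestronglyMeasurable
    apply Real.continuous_exp.comp
    apply Continuous.add
    · exact continuous_const.mul (((continuous_id.div_const σ).abs).rpow_const
        (fun x => Or.inr hβ0.le))
    · exact continuous_const.mul ((((continuous_id.sub continuous_const).div_const σ).abs).rpow_const
        (fun x => Or.inr hβ0.le))
  · filter_upwards with x
    rw [Real.norm_eq_abs, Real.abs_exp, ← Real.exp_add]
    exact Real.exp_le_exp.mpr (key x)
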